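/- Let Γ = G *_φ H be a free product with amalgamation, amalgamating A ≤ G with B ≤ H via the isomorphism φ : A → B. Suppose G' ≤ G and H' ≤ H satisfy φ(G' ∩ A) = H' ∩ B. Then the subgroup Γ' = ⟨G', H'⟩ of Γ is the free product of G' and H' amalgamated over G' ∩ A and H' ∩ B via the restriction of φ; moreover Γ' ∩ G = G', Γ' ∩ H = H', Γ' ∩ A = G' ∩ A, and Γ' ∩ B = H' ∩ B. -/

import Mathlib

namespace Stmt9Aux

open Monoid Monoid.PushoutI Monoid.CoprodI Monoid.PushoutI.NormalWord Function

variable {ι : Type*} {H : Type*} {G : ι → Type*} [Group H] [∀ i, Group (G i)]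
  {φ : ∀ i : ι, H →* G i}

/-- Letters of a normal word lie outside the base subgroup. -/
theorem eq_one_of_mem_set_of_mem_range {d : Transversal φ} {i : ι} {g : G i}
    (h1 : g ∈ d.set i) (h2 : g ∈ (φ i).range) : g = 1 := by
  have hinj := (d.compl i).1
  have heq := hinj (a₁ := (⟨⟨g, h2⟩, ⟨1, d.one_mem i⟩⟩ :
      ((φ i).range : Set (G i)) × (d.set i)))
      (a₂ := ⟨⟨1, Subgroup.one_mem _⟩, ⟨g, h1⟩⟩) (by simp)
  simpa using congrArg (fun p => (p.2 : G i)) heq.symm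

theorem reduced_toWord {d : Transversal φ} (n : NormalWord d) :
    Reduced φ n.toWord := by
  intro g hg hrange
  exact n.ne_one g hg (eq_one_of_mem_set_of_mem_range
    (n.normalized g.1 g.2 (by simpa using hg)) hrange)

theorem reduced_empty : Reduced φ (Word.empty) :=
  fun g hg => absurd hg List.not_mem_nil

/-- Every element of the pushout is a base element times the product of a reduced word. -/
theorem exists_decomp (hinj : ∀ i, Injective (φ i)) (x : PushoutI φ) :
    ∃ (k : H) (w : Word G), Reduced φ w ∧ x = base φ k * ofCoprodI w.prod := by
  classical
  rcases transversal_nonempty φ hinj with ⟨d⟩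
  refine ⟨(NormalWord.equiv (d := d) x).head, (NormalWord.equiv (d := d) x).toWord,
    reduced_toWord _, ?_⟩
  conv_lhs => rw [← (NormalWord.equiv (d := d)).symm_apply_apply x]
  rfl

/-- The sequence of indices of a reduced word is determined by its product,
even up to left multiplication by a base element. -/
theorem index_list_eq (hφinj : ∀ i, Injective (φ i)) {w₁ w₂ : Word G}
    (h₁ : Reduced φ w₁) (h₂ : Reduced φ w₂) (k : H)
    (heq : ofCoprodI w₁.prod = base φ k * ofCoprodI w₂.prod) :
    w₁.toList.map Sigma.fst = w₂.toList.map Sigma.fst := by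
  classical
  rcases transversal_nonempty φ hφinj with ⟨d⟩
  rcases h₁.exists_normalWord_prod_eq d with ⟨n₁, hp₁, hm₁⟩
  rcases h₂.exists_normalWord_prod_eq d with ⟨n₂, hp₂, hm₂⟩
  have hn : n₁ = k • n₂ := NormalWord.prod_injective (by
    rw [NormalWord.prod_base_smul, hp₁, hp₂, heq])
  have htl : (k • n₂).toList = n₂.toList := rfl
  rw [← hm₁, ← hm₂, hn, htl]

variable {G' : ι → Type*} [∀ i, Group (G' i)]

/-- Map a word along a family of injective homomorphisms. -/
def mapWord (j : ∀ i, G' i →* G i) (hj : ∀ i, Injective (j i)) (w : Word G') : Word G where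
  toList := w.toList.map (fun l => ⟨l.1, j l.1 l.2⟩)
  ne_one := by
    intro l hl
    rw [List.mem_map] at hl
    obtain ⟨l', hl', rfl⟩ := hl
    exact fun h => w.ne_one l' hl' (hj l'.1 (by simpa using h))
  chain_ne := by
    rw [List.isChain_map]
    exact w.chain_ne

@[simp]
theorem mapWord_toList (j : ∀ i, G' i →* G i) (hj : ∀ i, Injective (j i)) (w : Word G') :
    (mapWord j hj w).toList = w.toList.map (fun l => ⟨l.1, j l.1 l.2⟩) := rfl

variable {K : Type*} [Group K] {ψ : ∀ i : ι, K →* G' i}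

theorem map_ofCoprodI_prod (j : ∀ i, G' i →* G i) (hj : ∀ i, Injective (j i))
    (e : PushoutI ψ →* PushoutI φ)
    (he : ∀ (i : ι) (g : G' i), e (PushoutI.of (φ := ψ) i g) = PushoutI.of (φ := φ) i (j i g))
    (w : Word G') :
    e (ofCoprodI w.prod) = ofCoprodI (mapWord j hj w).prod := by
  have h1 : e (ofCoprodI w.prod) =
      (w.toList.map (fun l => PushoutI.of (φ := φ) l.1 (j l.1 l.2))).prod := by
    show (e.comp (ofCoprodI (φ := ψ))) w.prod = _
    rw [Word.prod, map_list_prod, List.map_map]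
    congr 1
    refine List.map_congr_left (fun l _ => ?_)
    simp [he]
  have h2 : ofCoprodI (mapWord j hj w).prod =
      (w.toList.map (fun l => PushoutI.of (φ := φ) l.1 (j l.1 l.2))).prod := by
    rw [Word.prod, map_list_prod, mapWord_toList, List.map_map, List.map_map]
    congr 1
  rw [h1, h2]

/-- Reducedness is preserved by `mapWord` when the inclusions don't create base elements. -/
theorem reduced_mapWord {j : ∀ i, G' i →* G i} {hj : ∀ i, Injective (j i)}
    (hpres : ∀ (i : ι) (g : G' i), g ∉ (ψ i).range → j i g ∉ (φ i).range)
    {w : Word G'} (hw : Reduced ψ w) : Reduced φ (mapWord j hj w) := by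
  intro l hl
  rw [mapWord_toList, List.mem_map] at hl
  obtain ⟨l', hl', rfl⟩ := hl
  exact hpres l'.1 l'.2 (hw l' hl')

/-- The main generic lemma: given compatible injective inclusions between two pushout
diagrams that don't create base elements, the induced map between the pushouts is
injective, and elements of a factor whose image lies in the range of the induced map
come from the subdiagram. -/
theorem main_aux (hφinj : ∀ i, Injective (φ i)) (hψinj : ∀ i, Injective (ψ i))
    (j : ∀ i, G' i →* G i) (hj : ∀ i, Injective (j i))
    (ρ : K →* H) (hρ : Injective ρ)
    (hpres : ∀ (i : ι) (g : G' i), g ∉ (ψ i).range → j i g ∉ (φ i).range)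
    (e : PushoutI ψ →* PushoutI φ)
    (he : ∀ (i : ι) (g : G' i), e (PushoutI.of (φ := ψ) i g) = PushoutI.of (φ := φ) i (j i g))
    (heb : ∀ k : K, e (base ψ k) = base φ (ρ k)) :
    Injective e ∧
    ∀ (i : ι) (g : G i), PushoutI.of (φ := φ) i g ∈ e.range →
      (∃ b : K, g = φ i (ρ b)) ∨ (∃ (b : K) (g' : G' i), g = φ i (ρ b) * j i g') := by
  classical
  constructor
  · rw [injective_iff_map_eq_one]
    intro x hx
    obtain ⟨b, w, hw, rfl⟩ := exists_decomp hψinj x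
    rw [map_mul, heb, map_ofCoprodI_prod j hj e he] at hx
    have heq : ofCoprodI (mapWord j hj w).prod
        = base φ (ρ b)⁻¹ * ofCoprodI (Word.empty (M := G)).prod := by
      rw [Word.prod_empty, map_one, mul_one, map_inv]
      exact (inv_eq_of_mul_eq_one_right hx).symm
    have hidx := index_list_eq hφinj (reduced_mapWord hpres hw) reduced_empty _ heq
    have hnil : w.toList = [] := by
      rw [mapWord_toList, List.map_map] at hidx
      simpa using hidx
    have hprod1 : w.prod = 1 := by rw [Word.prod, hnil, List.map_nil, List.prod_nil]
    have hprodm : (mapWord j hj w).prod = 1 := by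
      rw [Word.prod, mapWord_toList, hnil]; simp
    have hb1 : ρ b = 1 := by
      apply base_injective hφinj
      rw [map_one]
      rw [hprodm, map_one, mul_one] at hx
      exact hx
    have hb2 : b = 1 := hρ (hb1.trans (map_one ρ).symm)
    rw [hb2, hprod1, map_one, map_one, mul_one]
  · intro i g hg
    obtain ⟨x, hx⟩ := hg
    obtain ⟨b, w, hw, rfl⟩ := exists_decomp hψinj x
    rw [map_mul, heb, map_ofCoprodI_prod j hj e he] at hx
    by_cases hgr : g ∈ (φ i).range
    · obtain ⟨a0, rfl⟩ := hgr
      left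
      rw [of_apply_eq_base] at hx
      have heq : ofCoprodI (mapWord j hj w).prod
          = base φ ((ρ b)⁻¹ * a0) * ofCoprodI (Word.empty (M := G)).prod := by
        rw [Word.prod_empty, map_one, mul_one, map_mul, map_inv, ← hx, inv_mul_cancel_left]
      have hidx := index_list_eq hφinj (reduced_mapWord hpres hw) reduced_empty _ heq
      have hnil : w.toList = [] := by
        rw [mapWord_toList, List.map_map] at hidx
        simpa using hidx
      have hprodm : (mapWord j hj w).prod = 1 := by
        rw [Word.prod, mapWord_toList, hnil]; simp
      rw [hprodm, map_one, mul_one] at hx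
      exact ⟨b, (congrArg (φ i) (base_injective hφinj hx)).symm⟩
    · right
      have hg1 : g ≠ 1 := fun h => hgr (h ▸ Subgroup.one_mem _)
      let w₂ : Word G := ⟨[⟨i, g⟩],
        by rintro l hl; rw [List.mem_singleton] at hl; subst hl; exact hg1,
        List.isChain_singleton _⟩
      have hw₂red : Reduced φ w₂ := by
        intro l hl
        rw [show w₂.toList = [⟨i, g⟩] from rfl, List.mem_singleton] at hl
        subst hl
        exact hgr
      have hw₂prod : ofCoprodI w₂.prod = PushoutI.of (φ := φ) i g := by
        rw [Word.prod]
        simp [w₂]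
      have heq : ofCoprodI w₂.prod = base φ (ρ b) * ofCoprodI (mapWord j hj w).prod := by
        rw [hw₂prod, hx]
      have hidx := index_list_eq hφinj hw₂red (reduced_mapWord hpres hw) _ heq
      have hidx' : w.toList.map Sigma.fst = [i] := by
        rw [mapWord_toList, List.map_map] at hidx
        exact hidx.symm
      obtain ⟨l, hl1, hl2⟩ : ∃ l, w.toList = [l] ∧ l.1 = i := by
        cases hwl : w.toList with
        | nil => rw [hwl] at hidx'; simp at hidx'
        | cons a t =>
          rw [hwl, List.map_cons] at hidx'
          injection hidx' with h1 h2
          exact ⟨a, by rw [List.map_eq_nil_iff.mp h2], h1⟩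
      obtain ⟨i', gl⟩ := l
      simp only at hl2
      subst hl2
      have hwprod : ofCoprodI (mapWord j hj w).prod
          = PushoutI.of (φ := φ) i' (j i' gl) := by
        rw [Word.prod, mapWord_toList, hl1]
        simp
      rw [hwprod, ← of_apply_eq_base φ i' (ρ b), ← map_mul] at hx
      exact ⟨b, gl, (of_injective hφinj i' hx).symm⟩

end Stmt9Aux


namespace Stmt9

open Monoid

universe u

/-- The two-object family consisting of the groups `GG` and `HH`. -/
def fam (GG HH : Type u) : Bool → Type _ := fun i => cond i GG HH

instance (GG HH : Type u) [Group GG] [Group HH] (i : Bool) : Group (fam GG HH i) := by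
  cases i
  · exact inferInstanceAs (Group HH)
  · exact inferInstanceAs (Group GG)

/-- The amalgamation maps `A → GG` (inclusion) and `A → HH` (via `φ : A ≃* B`),
so that `PushoutI (amalgMaps A B φ)` is the amalgamated free product `GG *_φ HH`. -/
def amalgMaps {GG HH : Type u} [Group GG] [Group HH] (A : Subgroup GG) (B : Subgroup HH)
    (φ : A ≃* B) : ∀ i : Bool, ↥A →* fam GG HH i := fun i =>
  match i with
  | true => A.subtype
  | false => B.subtype.comp φ.toMonoidHom

/-- The corresponding maps for the restricted data: `A' = G' ∩ A` includes into `G'`,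
and maps into `H'` via (a restriction `ψH` of) `φ`. -/
def restMaps {GG HH : Type u} [Group GG] [Group HH] (G' : Subgroup GG) (H' : Subgroup HH)
    (A' : Subgroup ↥G') (ψH : ↥A' →* ↥H') : ∀ i : Bool, ↥A' →* fam ↥G' ↥H' i := fun i =>
  match i with
  | true => A'.subtype
  | false => ψH

/-- Lemma on subgroups of an amalgamated free product `Γ = GG *_φ HH` (amalgamating
`A ≤ GG` with `B ≤ HH` via `φ`): if `G' ≤ GG`, `H' ≤ HH` satisfy `φ(G' ∩ A) = H' ∩ B`,
then `Γ' = ⟨G', H'⟩` is the amalgamated product of `G'` and `H'` over `G' ∩ A` and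
`H' ∩ B` via the restriction of `φ` (there is an injective homomorphism from that
amalgamated product onto `Γ'` compatible with the inclusions), and moreover
`Γ' ∩ GG = G'`, `Γ' ∩ HH = H'`, `Γ' ∩ A = G' ∩ A`, `Γ' ∩ B = H' ∩ B`. -/
theorem subgroups_in_amalgamated_product
    {GG HH : Type u} [Group GG] [Group HH]
    (A : Subgroup GG) (B : Subgroup HH) (φ : ↥A ≃* ↥B)
    (G' : Subgroup GG) (H' : Subgroup HH)
    -- `φ(G' ∩ A) = H' ∩ B`:
    (hGH : ∀ a : ↥A, (a : GG) ∈ G' ↔ ((φ a : ↥B) : HH) ∈ H')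
    -- `ψH` is the restriction of `φ` to `A' = G' ∩ A`, mapping into `H'`:
    (ψH : ↥(A.comap G'.subtype) →* ↥H')
    (hψH : ∀ x : ↥(A.comap G'.subtype),
      ((ψH x : ↥H') : HH) = ((φ ⟨((x : ↥G') : GG), x.2⟩ : ↥B) : HH)) :
    ∀ Γ' : Subgroup (PushoutI (amalgMaps A B φ)),
      Γ' = (G'.map (PushoutI.of (φ := amalgMaps A B φ) true)) ⊔
           (H'.map (PushoutI.of (φ := amalgMaps A B φ) false)) →
      -- (1) `Γ' = G' *_{φ'} H'`:
      (∃ e : PushoutI (restMaps G' H' (A.comap G'.subtype) ψH) →*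
          PushoutI (amalgMaps A B φ),
        Function.Injective e ∧ e.range = Γ' ∧
        (∀ g : ↥G', e (PushoutI.of (φ := restMaps G' H' (A.comap G'.subtype) ψH) true g)
            = PushoutI.of (φ := amalgMaps A B φ) true (g : GG)) ∧
        (∀ h : ↥H', e (PushoutI.of (φ := restMaps G' H' (A.comap G'.subtype) ψH) false h)
            = PushoutI.of (φ := amalgMaps A B φ) false (h : HH))) ∧
      -- (3) `Γ' ∩ GG = G'` and `Γ' ∩ HH = H'`:
      Γ'.comap (PushoutI.of (φ := amalgMaps A B φ) true) = G' ∧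
      Γ'.comap (PushoutI.of (φ := amalgMaps A B φ) false) = H' ∧
      -- (2) `Γ' ∩ A = G' ∩ A` and `Γ' ∩ B = H' ∩ B`:
      (∀ a : ↥A, PushoutI.of (φ := amalgMaps A B φ) true (a : GG) ∈ Γ' ↔ (a : GG) ∈ G') ∧
      (∀ b : ↥B, PushoutI.of (φ := amalgMaps A B φ) false (b : HH) ∈ Γ' ↔ (b : HH) ∈ H') := by
  classical
  intro Γ' hΓ'
  subst hΓ'
  -- the inclusion maps of the diagrams
  let j : ∀ i : Bool, fam ↥G' ↥H' i →* fam GG HH i := fun i =>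
    match i with
    | true => G'.subtype
    | false => H'.subtype
  have hjinj : ∀ i, Function.Injective (j i) := by
    intro i; cases i
    · exact Subtype.val_injective
    · exact Subtype.val_injective
  let ρ : ↥(A.comap G'.subtype) →* ↥A :=
    { toFun := fun x => ⟨((x : ↥G') : GG), x.2⟩
      map_one' := rfl
      map_mul' := fun _ _ => rfl }
  have hρinj : Function.Injective ρ := fun x y h => by
    apply Subtype.ext; apply Subtype.ext
    have h2 := congrArg Subtype.val h
    exact h2
  have hΦinj : ∀ i, Function.Injective (amalgMaps A B φ i) := by
    intro i; cases i
    · exact fun x y h => φ.injective (Subtype.ext h)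
    · exact Subtype.val_injective
  have hΨinj : ∀ i, Function.Injective (restMaps G' H' (A.comap G'.subtype) ψH i) := by
    intro i; cases i
    · intro x y hxy
      have h1 : ((ψH x : ↥H') : HH) = ((ψH y : ↥H') : HH) := congrArg _ hxy
      rw [hψH, hψH] at h1
      exact hρinj (φ.injective (Subtype.ext h1))
    · exact Subtype.val_injective
  have hcomp : ∀ i : Bool,
      ((PushoutI.of (φ := amalgMaps A B φ) i).comp (j i)).comp
        (restMaps G' H' (A.comap G'.subtype) ψH i)
      = (PushoutI.base (amalgMaps A B φ)).comp ρ := by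
    intro i
    cases i
    · ext x
      show PushoutI.of (φ := amalgMaps A B φ) false ((ψH x : ↥H') : HH) = _
      rw [hψH x]
      exact PushoutI.of_apply_eq_base (amalgMaps A B φ) false (ρ x)
    · ext x
      exact PushoutI.of_apply_eq_base (amalgMaps A B φ) true (ρ x)
  let e : PushoutI (restMaps G' H' (A.comap G'.subtype) ψH) →* PushoutI (amalgMaps A B φ) :=
    PushoutI.lift (fun i => (PushoutI.of (φ := amalgMaps A B φ) i).comp (j i))
      ((PushoutI.base (amalgMaps A B φ)).comp ρ) hcomp
  have he_of : ∀ (i : Bool) (g : fam ↥G' ↥H' i),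
      e (PushoutI.of (φ := restMaps G' H' (A.comap G'.subtype) ψH) i g)
        = PushoutI.of (φ := amalgMaps A B φ) i (j i g) := fun i g => by
    exact PushoutI.lift_of _ _ hcomp g
  have he_base : ∀ x : ↥(A.comap G'.subtype),
      e (PushoutI.base (restMaps G' H' (A.comap G'.subtype) ψH) x)
        = PushoutI.base (amalgMaps A B φ) (ρ x) := fun x => by
    exact PushoutI.lift_base _ _ hcomp x
  have hpres : ∀ (i : Bool) (g : fam ↥G' ↥H' i),
      g ∉ (restMaps G' H' (A.comap G'.subtype) ψH i).range →
      j i g ∉ (amalgMaps A B φ i).range := by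
    intro i
    cases i
    · intro (g : ↥H') hg hmem
      obtain ⟨a, ha⟩ := hmem
      have hb : ((φ a : ↥B) : HH) = (g : HH) := ha
      have hG : (a : GG) ∈ G' := (hGH a).2 (by rw [hb]; exact g.2)
      refine hg ⟨⟨⟨(a : GG), hG⟩, a.2⟩, ?_⟩
      show ψH ⟨⟨(a : GG), hG⟩, a.2⟩ = g
      apply Subtype.ext
      rw [hψH]
      exact (congrArg (fun z : ↥A => ((φ z : ↥B) : HH))
        (Subtype.ext rfl : (⟨(a : GG), a.2⟩ : ↥A) = a)).trans hb
    · intro (g : ↥G') hg hmem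
      obtain ⟨a, ha⟩ := hmem
      refine hg ⟨⟨g, ?_⟩, rfl⟩
      have h2 : (a : GG) = (g : GG) := ha
      show ((g : ↥G') : GG) ∈ A
      rw [← h2]
      exact a.2
  -- the range of e
  have hrange : e.range = (G'.map (PushoutI.of (φ := amalgMaps A B φ) true)) ⊔
      (H'.map (PushoutI.of (φ := amalgMaps A B φ) false)) := by
    apply le_antisymm
    · rintro x ⟨y, rfl⟩
      induction y using PushoutI.induction_on with
      | of i g =>
        rw [he_of]
        cases i
        · exact Subgroup.mem_sup_right
            (Subgroup.mem_map_of_mem _ (show ↥H' from g).2)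
        · exact Subgroup.mem_sup_left
            (Subgroup.mem_map_of_mem _ (show ↥G' from g).2)
      | base h =>
        rw [he_base, ← PushoutI.of_apply_eq_base (amalgMaps A B φ) true (ρ h)]
        exact Subgroup.mem_sup_left (Subgroup.mem_map_of_mem _ h.1.2)
      | mul x y hx hy => rw [map_mul]; exact mul_mem hx hy
    · refine sup_le ?_ ?_
      · intro x hx
        obtain ⟨g, hg, rfl⟩ := hx
        exact ⟨PushoutI.of (φ := restMaps G' H' (A.comap G'.subtype) ψH) true ⟨g, hg⟩,
          by exact he_of true ⟨g, hg⟩⟩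
      · intro x hx
        obtain ⟨g, hg, rfl⟩ := hx
        exact ⟨PushoutI.of (φ := restMaps G' H' (A.comap G'.subtype) ψH) false ⟨g, hg⟩,
          by exact he_of false ⟨g, hg⟩⟩
  obtain ⟨heinj, hfact⟩ := Stmt9Aux.main_aux hΦinj hΨinj j hjinj ρ hρinj hpres e he_of he_base
  -- the two comap identities
  have hct : ((G'.map (PushoutI.of (φ := amalgMaps A B φ) true)) ⊔
      (H'.map (PushoutI.of (φ := amalgMaps A B φ) false))).comap
        (PushoutI.of (φ := amalgMaps A B φ) true) = G' := by
    apply le_antisymm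
    · intro g hg
      rw [Subgroup.mem_comap, ← hrange] at hg
      rcases hfact true g hg with ⟨b, hb⟩ | ⟨b, g', hb⟩
      · rw [hb]; exact b.1.2
      · rw [hb]; exact mul_mem b.1.2 (show ↥G' from g').2
    · intro g hg
      rw [Subgroup.mem_comap, ← hrange]
      exact ⟨PushoutI.of (φ := restMaps G' H' (A.comap G'.subtype) ψH) true ⟨g, hg⟩,
        by exact he_of true ⟨g, hg⟩⟩
  have hcf : ((G'.map (PushoutI.of (φ := amalgMaps A B φ) true)) ⊔
      (H'.map (PushoutI.of (φ := amalgMaps A B φ) false))).comap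
        (PushoutI.of (φ := amalgMaps A B φ) false) = H' := by
    apply le_antisymm
    · intro g hg
      rw [Subgroup.mem_comap, ← hrange] at hg
      rcases hfact false g hg with ⟨b, hb⟩ | ⟨b, g', hb⟩
      · rw [hb]; exact (hGH (ρ b)).1 b.1.2
      · rw [hb]; exact mul_mem ((hGH (ρ b)).1 b.1.2) (show ↥H' from g').2
    · intro g hg
      rw [Subgroup.mem_comap, ← hrange]
      exact ⟨PushoutI.of (φ := restMaps G' H' (A.comap G'.subtype) ψH) false ⟨g, hg⟩,
        by exact he_of false ⟨g, hg⟩⟩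
  refine ⟨⟨e, heinj, hrange, fun g => by exact he_of true g,
    fun h => by exact he_of false h⟩, hct, hcf, ?_, ?_⟩
  · intro a
    conv_rhs => rw [← hct]
    exact (Subgroup.mem_comap).symm
  · intro b
    conv_rhs => rw [← hcf]
    exact (Subgroup.mem_comap).symm

end Stmt9
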